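/- Let m > 0, c > 3m, and define ν₊ : [c,∞) → ℝ by ν₊(r)² = c²/((1-3m/c)·sqrt(1-2m/c)) + ∫_c^r 2s/(1-2m/s)^{3/2} ds. Then for all r ≥ c, ν₊(r)² ≥ r²/((1-3m/r)·sqrt(1-2m/r)). -/

import Mathlib

open Real

namespace NuPlusAux

noncomputable def g (m x : ℝ) : ℝ := x^3 * Real.sqrt x / ((x - 3*m) * Real.sqrt (x - 2*m))

noncomputable def g' (m x : ℝ) : ℝ :=
  ((3*x^2*Real.sqrt x + x^3 / (2*Real.sqrt x)) * ((x - 3*m) * Real.sqrt (x - 2*m)) -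
    x^3 * Real.sqrt x * (Real.sqrt (x - 2*m) + (x - 3*m) / (2*Real.sqrt (x - 2*m)))) /
  ((x - 3*m) * Real.sqrt (x - 2*m))^2

noncomputable def f (m x : ℝ) : ℝ := 2*x^2*Real.sqrt x / ((x - 2*m) * Real.sqrt (x - 2*m))

theorem hderiv (m : ℝ) (hm : 0 < m) {x : ℝ} (hx : 3*m < x) : HasDerivAt (g m) (g' m x) x := by
  have hx0 : 0 < x := by linarith
  have hx2 : 0 < x - 2*m := by linarith
  have hx3 : 0 < x - 3*m := by linarith
  have hu : HasDerivAt (fun y : ℝ => y^3 * Real.sqrt y)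
      (3*x^2*Real.sqrt x + x^3 / (2*Real.sqrt x)) x := by
    have : HasDerivAt (fun y : ℝ => y^3 * Real.sqrt y) _ x := (hasDerivAt_pow 3 x).fun_mul (Real.hasDerivAt_sqrt hx0.ne')
    convert this using 1
    push_cast
    ring
  have hs2 : HasDerivAt (fun y : ℝ => Real.sqrt (y - 2*m)) (1/(2*Real.sqrt (x - 2*m))) x := by
    have := (Real.hasDerivAt_sqrt hx2.ne').comp x ((hasDerivAt_id x).sub_const (2*m))
    simpa [Function.comp_def] using this
  have hv : HasDerivAt (fun y : ℝ => (y - 3*m) * Real.sqrt (y - 2*m))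
      (Real.sqrt (x - 2*m) + (x - 3*m) / (2*Real.sqrt (x - 2*m))) x := by
    have : HasDerivAt (fun y : ℝ => (y - 3*m) * Real.sqrt (y - 2*m)) _ x := ((hasDerivAt_id x).sub_const (3*m)).fun_mul hs2
    convert this using 1
    simp only [id_eq]
    ring
  have hvne : (x - 3*m) * Real.sqrt (x - 2*m) ≠ 0 :=
    ne_of_gt (mul_pos hx3 (Real.sqrt_pos.2 hx2))
  exact hu.div hv hvne

theorem hbound (m : ℝ) (hm : 0 < m) {x : ℝ} (hx : 3*m < x) : g' m x ≤ f m x := by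
  have hx0 : 0 < x := by linarith
  have hx2 : 0 < x - 2*m := by linarith
  have hx3 : 0 < x - 3*m := by linarith
  have hs0 : 0 < Real.sqrt x := Real.sqrt_pos.2 hx0
  have ht0 : 0 < Real.sqrt (x - 2*m) := Real.sqrt_pos.2 hx2
  have hs : Real.sqrt x ^ 2 = x := Real.sq_sqrt hx0.le
  have ht : Real.sqrt (x - 2*m) ^ 2 = x - 2*m := Real.sq_sqrt hx2.le
  rw [g', f, div_le_div_iff₀ (by positivity) (by positivity)]
  set s := Real.sqrt x with hsdef
  set t := Real.sqrt (x - 2*m) with htdef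
  rw [← hs]
  have ht2 : t^2 = s^2 - 2*m := by rw [ht, ← hs]
  have h3 : 0 < 2*s^2 - 3*m := by nlinarith
  have hprod : s^8 * t * (s^2-3*m) * (t^2 - (s^2-2*m)) = 0 := by rw [ht2]; ring
  have hpos : 0 < m*(2*s^2-3*m)*s^6*t^3 :=
    mul_pos (mul_pos (mul_pos hm h3) (pow_pos hs0 6)) (pow_pos ht0 3)
  field_simp
  rw [ht2, hs]
  nlinarith [mul_pos (mul_pos hm hx3) hx2, mul_pos (mul_pos hm hm) hx2]

theorem g_eq (m : ℝ) (hm : 0 < m) {x : ℝ} (hx : 3*m < x) :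
    x ^ 2 / ((1 - 3 * m / x) * Real.sqrt (1 - 2 * m / x)) = g m x := by
  have hx0 : 0 < x := by linarith
  have hx2 : 0 < x - 2*m := by linarith
  have hx3 : 0 < x - 3*m := by linarith
  have h1 : 1 - 3*m/x = (x - 3*m)/x := by field_simp
  have h2 : 1 - 2*m/x = (x - 2*m)/x := by field_simp
  rw [g, h1, h2, Real.sqrt_div hx2.le]
  have hs0 : 0 < Real.sqrt x := Real.sqrt_pos.2 hx0
  have ht0 : 0 < Real.sqrt (x - 2*m) := Real.sqrt_pos.2 hx2
  have hs : Real.sqrt x ^ 2 = x := Real.sq_sqrt hx0.le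
  rw [div_eq_div_iff (by positivity) (by positivity)]
  field_simp

theorem f_eq (m : ℝ) (hm : 0 < m) {x : ℝ} (hx : 3*m < x) :
    2 * x / (1 - 2 * m / x) ^ ((3:ℝ)/2) = f m x := by
  have hx0 : 0 < x := by linarith
  have hx2 : 0 < x - 2*m := by linarith
  have h2 : 1 - 2*m/x = (x - 2*m)/x := by field_simp
  have haux : ∀ a : ℝ, 0 ≤ a → a ^ ((3:ℝ)/2) = a * Real.sqrt a := by
    intro a ha
    rw [show (3:ℝ)/2 = 1 + 1/2 by norm_num, Real.rpow_add' ha (by norm_num),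
      Real.rpow_one, ← Real.sqrt_eq_rpow]
  rw [f, h2, haux _ (by positivity), Real.sqrt_div hx2.le]
  have hs0 : 0 < Real.sqrt x := Real.sqrt_pos.2 hx0
  have ht0 : 0 < Real.sqrt (x - 2*m) := Real.sqrt_pos.2 hx2
  have hs : Real.sqrt x ^ 2 = x := Real.sq_sqrt hx0.le
  rw [div_eq_div_iff (by positivity) (by positivity)]
  field_simp

theorem f_contOn (m : ℝ) (hm : 0 < m) {a b : ℝ} (ha : 3*m < a) :
    ContinuousOn (f m) (Set.Icc a b) := by
  apply ContinuousOn.div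
  · fun_prop
  · fun_prop
  · intro x hx
    have hx2 : 0 < x - 2*m := by have := hx.1; linarith
    positivity

theorem g'_contOn (m : ℝ) (hm : 0 < m) {a b : ℝ} (ha : 3*m < a) :
    ContinuousOn (g' m) (Set.Icc a b) := by
  have h2 : ∀ x ∈ Set.Icc a b, 0 < x - 2*m := fun x hx => by have := hx.1; linarith
  have h0 : ∀ x ∈ Set.Icc a b, 0 < x := fun x hx => by have := hx.1; linarith
  have h3 : ∀ x ∈ Set.Icc a b, 0 < x - 3*m := fun x hx => by have := hx.1; linarith
  apply ContinuousOn.div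
  · apply ContinuousOn.sub
    · apply ContinuousOn.mul
      · apply ContinuousOn.add
        · fun_prop
        · apply ContinuousOn.div
          · fun_prop
          · fun_prop
          · intro x hx
            have := Real.sqrt_pos.2 (h0 x hx)
            positivity
      · fun_prop
    · apply ContinuousOn.mul
      · fun_prop
      · apply ContinuousOn.add
        · fun_prop
        · apply ContinuousOn.div
          · fun_prop
          · fun_prop
          · intro x hx
            have := Real.sqrt_pos.2 (h2 x hx)
            positivity
  · fun_prop
  · intro x hx
    have hs := Real.sqrt_pos.2 (h2 x hx)
    have := h3 x hx
    positivity

end NuPlusAux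

/-- With `ν₊(r)² = c²/((1-3m/c)√(1-2m/c)) + ∫_c^r 2s/(1-2m/s)^{3/2} ds`,
one has `ν₊(r)² ≥ r²/((1-3m/r)√(1-2m/r))` for all `r ≥ c > 3m`. -/
theorem nu_plus_sq_lower_bound (m c : ℝ) (hm : 0 < m) (hc : 3 * m < c)
    (r : ℝ) (hr : c ≤ r) :
    r ^ 2 / ((1 - 3 * m / r) * Real.sqrt (1 - 2 * m / r)) ≤
      c ^ 2 / ((1 - 3 * m / c) * Real.sqrt (1 - 2 * m / c)) +
        ∫ s in c..r, 2 * s / (1 - 2 * m / s) ^ ((3:ℝ)/2) := by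
  open NuPlusAux in
  have hcr : 3*m < r := lt_of_lt_of_le hc hr
  have huIcc : Set.uIcc c r = Set.Icc c r := Set.uIcc_of_le hr
  have hmem : ∀ x ∈ Set.Icc c r, 3*m < x := fun x hx => lt_of_lt_of_le hc hx.1
  have hint_g' : IntervalIntegrable (g' m) MeasureTheory.volume c r :=
    ContinuousOn.intervalIntegrable (by rw [huIcc]; exact g'_contOn m hm hc)
  have hint_f : IntervalIntegrable (f m) MeasureTheory.volume c r :=
    ContinuousOn.intervalIntegrable (by rw [huIcc]; exact f_contOn m hm hc)
  have hftc : ∫ x in c..r, g' m x = g m r - g m c := by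
    apply intervalIntegral.integral_eq_sub_of_hasDerivAt _ hint_g'
    intro x hx
    exact hderiv m hm (hmem x (huIcc ▸ hx))
  have hmono : ∫ x in c..r, g' m x ≤ ∫ x in c..r, f m x :=
    intervalIntegral.integral_mono_on hr hint_g' hint_f (fun x hx => hbound m hm (hmem x hx))
  have hcongr : ∫ s in c..r, 2 * s / (1 - 2 * m / s) ^ ((3:ℝ)/2) = ∫ x in c..r, f m x :=
    intervalIntegral.integral_congr (fun x hx => f_eq m hm (hmem x (huIcc ▸ hx)))
  rw [g_eq m hm hcr, g_eq m hm hc, hcongr]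
  linarith [hftc, hmono]
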